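/- Assume μ_1 < 0 < μ_n (a mixed case). Then g(β) < 0 for all β < μ_1, so f is defined on (−∞, μ_1) and f(β) > −1 there; moreover f(β) → −1 + 2/(n−1) as β → −∞, f(β) → −1 as β → μ_1 from the left, and f is bounded above on (−∞, μ_1). In particular, for every real λ ≤ −1 the equation f(β) = λ has no solution in (−∞, μ_1), and only λ in a bounded subinterval above −1 can be values of f. -/

import Mathlib

open Set Finset Filter

/-- Mixed case `μ₁ < 0 < μₙ`: `g < 0` on `(-∞, μ₁)`, `f > -1` there,
`f(β) → -1 + 2/(n-1)` as `β → -∞`, `f(β) → -1` as `β → μ₁⁻`, `f` is bounded above on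
`(-∞, μ₁)`, and for `λ ≤ -1` the equation `f(β) = λ` has no solution in `(-∞, μ₁)`. -/
theorem mixed_f_range (n : ℕ) (hn : 2 ≤ n) (μ : Fin n → ℝ) (hμ : Monotone μ)
    (g : ℝ → ℝ)
    (hg : ∀ β : ℝ, (∀ j, β ≠ μ j) → g β = 1 + β * ∑ j, 1 / (μ j - β))
    (f : ℝ → ℝ)
    (hf : ∀ β : ℝ, g β ≠ 0 → f β = -1 - 2 / g β)
    (hμ1 : μ ⟨0, by omega⟩ < 0) (hμn : 0 < μ ⟨n - 1, by omega⟩) :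
    (∀ β : ℝ, β < μ ⟨0, by omega⟩ → g β < 0) ∧
    (∀ β : ℝ, β < μ ⟨0, by omega⟩ → -1 < f β) ∧
    Tendsto f atBot (nhds (-1 + 2 / ((n : ℝ) - 1))) ∧
    Tendsto f (nhdsWithin (μ ⟨0, by omega⟩) (Iio (μ ⟨0, by omega⟩))) (nhds (-1)) ∧
    BddAbove (f '' Iio (μ ⟨0, by omega⟩)) ∧
    (∀ lam : ℝ, lam ≤ -1 → ¬∃ β : ℝ, β < μ ⟨0, by omega⟩ ∧ f β = lam) := by
  haveI : NeZero n := ⟨by omega⟩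
  set μ0 : ℝ := μ ⟨0, by omega⟩ with hμ0def
  set μm : ℝ := μ ⟨n - 1, by omega⟩ with hμmdef
  have hz : (⟨0, by omega⟩ : Fin n) = 0 := rfl
  have hle : ∀ j : Fin n, μ0 ≤ μ j := fun j => hμ (by simp [hz, Fin.zero_le])
  have hlem : ∀ j : Fin n, μ j ≤ μm := fun j => hμ (by
    have := j.isLt; rw [Fin.le_def]; simp only [Fin.val_mk]; omega)
  have hμ00 : μ (0 : Fin n) = μ0 := (congrArg μ hz).symm
  have hpos : ∀ (β : ℝ), β < μ0 → ∀ j, 0 < μ j - β := by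
    intro β hβ j; have := hle j; linarith
  have hnR : (2:ℝ) ≤ (n:ℝ) := by exact_mod_cast hn
  set c0 : ℝ := -μ0 / (μm - μ0) with hc0def
  have hc0pos : 0 < c0 := div_pos (by linarith) (by linarith)
  have hc0le1 : c0 ≤ 1 := by
    rw [div_le_one (by linarith)]; linarith
  set c : ℝ := ((n:ℝ) - 1) * c0 with hcdef
  have hcpos : 0 < c := mul_pos (by linarith) hc0pos
  -- the explicit formula
  set G : ℝ → ℝ := fun β => 1 + β * ∑ j, 1 / (μ j - β) with hGdef
  have hgG : ∀ β, β < μ0 → g β = G β := by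
    intro β hβ
    exact hg β (fun j => by have := hpos β hβ j; intro h; rw [h] at this; linarith)
  -- uniform bound : G β ≤ -c for β < μ0
  have hGle : ∀ β, β < μ0 → G β ≤ -c := by
    intro β hβ
    have hterm : ∀ j : Fin n, β / (μ j - β) ≤ -c0 := by
      intro j
      have hd := hpos β hβ j
      rw [div_le_iff₀ hd]
      have h1 : β * μm ≤ μ0 * μm := by nlinarith
      have h2 : μ0 * μm ≤ μ0 * μ j := by nlinarith [hlem j]
      have hkey : β * μm ≤ μ0 * μ j := h1.trans h2
      have hdm : (0:ℝ) < μm - μ0 := by linarith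
      have hrw : -c0 * (μ j - β) = (μ0 * (μ j - β)) / (μm - μ0) := by
        rw [hc0def]; field_simp
      rw [hrw, le_div_iff₀ hdm]
      nlinarith
    have hterm0 : β / (μ0 - β) ≤ -1 := by
      have hd : (0:ℝ) < μ0 - β := by linarith
      rw [div_le_iff₀ hd]
      nlinarith
    have hsum : ∑ j, β / (μ j - β) ≤ -1 + ((n:ℝ) - 1) * (-c0) := by
      rw [← Finset.add_sum_erase _ _ (Finset.mem_univ (0 : Fin n))]
      have h2 : ∑ j ∈ Finset.univ.erase (0 : Fin n), β / (μ j - β) ≤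
          ∑ _j ∈ Finset.univ.erase (0 : Fin n), (-c0) :=
        Finset.sum_le_sum fun j _ => hterm j
      have hcard : (Finset.univ.erase (0 : Fin n)).card = n - 1 := by
        rw [Finset.card_erase_of_mem (Finset.mem_univ _)]; simp
      have h3 : ∑ _j ∈ Finset.univ.erase (0 : Fin n), (-c0) = ((n:ℝ) - 1) * (-c0) := by
        rw [Finset.sum_const, hcard, nsmul_eq_mul]
        congr 1
        have : (1:ℝ) ≤ (n:ℝ) := by linarith
        push_cast [Nat.cast_sub (by omega : 1 ≤ n)]
        ring
      have h0 : β / (μ (0:Fin n) - β) ≤ -1 := by rw [hμ00]; exact hterm0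
      linarith
    have : G β = 1 + ∑ j, β / (μ j - β) := by
      simp only [hGdef, Finset.mul_sum, mul_one_div]
    rw [this]
    have : -c = 1 + (-1 + ((n:ℝ) - 1) * (-c0)) := by rw [hcdef]; ring
    linarith
  have hgle : ∀ β, β < μ0 → g β ≤ -c := fun β hβ => (hgG β hβ) ▸ hGle β hβ
  have hgneg : ∀ β, β < μ0 → g β < 0 := fun β hβ => lt_of_le_of_lt (hgle β hβ) (by linarith)
  have hfgt : ∀ β, β < μ0 → -1 < f β := by
    intro β hβ
    have hgβ := hgneg β hβ
    rw [hf β (ne_of_lt hgβ)]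
    have : 2 / g β < 0 := div_neg_of_pos_of_neg (by norm_num) hgβ
    linarith
  have hfle : ∀ β, β < μ0 → f β ≤ -1 + 2 / c := by
    intro β hβ
    have hgβ := hgneg β hβ
    rw [hf β (ne_of_lt hgβ)]
    have h1 : 2 / (-g β) ≤ 2 / c :=
      div_le_div_of_nonneg_left (by norm_num) hcpos (by linarith [hgle β hβ])
    rw [div_neg] at h1
    linarith
  refine ⟨hgneg, hfgt, ?_, ?_, ?_, ?_⟩
  · -- limit at -∞
    have hGtend : Tendsto G atBot (nhds (1 - (n:ℝ))) := by
      have hG' : G = fun β => 1 + ∑ j, β / (μ j - β) := by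
        funext β; simp only [hGdef, Finset.mul_sum, mul_one_div]
      rw [hG']
      have hsum : Tendsto (fun β => ∑ j : Fin n, β / (μ j - β)) atBot
          (nhds (∑ _j : Fin n, (-1 : ℝ))) := by
        refine tendsto_finset_sum _ fun j _ => ?_
        have hd : Tendsto (fun β : ℝ => μ j - β) atBot atTop := by
          simpa [sub_eq_add_neg] using
            tendsto_atTop_add_const_left atBot (μ j) tendsto_neg_atBot_atTop
        have h0 : Tendsto (fun β : ℝ => μ j / (μ j - β) - 1) atBot (nhds (-1)) := by
          simpa using (tendsto_const_nhds.div_atTop hd).sub_const 1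
        refine h0.congr' ?_
        filter_upwards [eventually_lt_atBot (μ j)] with β hβ
        have : μ j - β ≠ 0 := by intro h; linarith [h ▸ (by linarith : (0:ℝ) < μ j - β)]
        field_simp
        ring
      have : (∑ _j : Fin n, (-1:ℝ)) = -(n:ℝ) := by simp
      rw [this] at hsum
      have := hsum.const_add (1:ℝ)
      simpa [sub_eq_add_neg] using this
    have hne : (1 - (n:ℝ)) ≠ 0 := by intro h; linarith
    have hftend : Tendsto (fun β => -1 - 2 / G β) atBot
        (nhds (-1 - 2 / (1 - (n:ℝ)))) :=
      (tendsto_const_nhds.sub ((tendsto_const_nhds.div hGtend hne)))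
    have heq : (-1 - 2 / (1 - (n:ℝ))) = -1 + 2 / ((n:ℝ) - 1) := by
      have h2 : (n:ℝ) - 1 ≠ 0 := by intro h; linarith
      field_simp
      ring
    rw [heq] at hftend
    refine Tendsto.congr' ?_ hftend
    filter_upwards [eventually_lt_atBot μ0] with β hβ
    rw [hf β (ne_of_lt (hgneg β hβ)), hgG β hβ]
  · -- limit at μ0⁻
    have hself : ∀ᶠ β in nhdsWithin μ0 (Iio μ0), β < μ0 :=
      eventually_mem_nhdsWithin
    have hStop : Tendsto (fun β => ∑ j, 1 / (μ j - β)) (nhdsWithin μ0 (Iio μ0)) atTop := by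
      have h1 : Tendsto (fun β : ℝ => μ0 - β) (nhdsWithin μ0 (Iio μ0)) (nhdsWithin 0 (Ioi 0)) := by
        apply tendsto_nhdsWithin_of_tendsto_nhds_of_eventually_within
        · have : Tendsto (fun β : ℝ => μ0 - β) (nhds μ0) (nhds (μ0 - μ0)) :=
            (continuous_const.sub continuous_id).tendsto μ0
          simpa using this.mono_left nhdsWithin_le_nhds
        · filter_upwards [hself] with β hβ; simpa using sub_pos.2 hβ
      have h2 : Tendsto (fun β : ℝ => (μ0 - β)⁻¹) (nhdsWithin μ0 (Iio μ0)) atTop :=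
        tendsto_inv_nhdsGT_zero.comp h1
      refine tendsto_atTop_mono' _ ?_ h2
      filter_upwards [hself] with β hβ
      have hsingle := Finset.single_le_sum (f := fun j : Fin n => 1 / (μ j - β))
        (fun j _ => le_of_lt (one_div_pos.2 (hpos β hβ j))) (Finset.mem_univ (0 : Fin n))
      calc (μ0 - β)⁻¹ = 1 / (μ (0:Fin n) - β) := by rw [hμ00, one_div]
        _ ≤ ∑ j, 1 / (μ j - β) := hsingle
    have hGbot : Tendsto G (nhdsWithin μ0 (Iio μ0)) atBot := by
      have hmul : Tendsto (fun β => 1 + (μ0 / 2) * ∑ j, 1 / (μ j - β))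
          (nhdsWithin μ0 (Iio μ0)) atBot := by
        have : Tendsto (fun β => (μ0 / 2) * ∑ j, 1 / (μ j - β))
            (nhdsWithin μ0 (Iio μ0)) atBot :=
          (tendsto_const_mul_atBot_of_neg (by linarith)).2 hStop
        simpa using tendsto_atBot_add_const_left _ 1 this
      refine tendsto_atBot_mono' _ ?_ hmul
      filter_upwards [hself] with β hβ
      have hSnn : 0 ≤ ∑ j, 1 / (μ j - β) :=
        Finset.sum_nonneg fun j _ => le_of_lt (one_div_pos.2 (hpos β hβ j))
      have hβ2 : β ≤ μ0 / 2 := by linarith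
      have := mul_le_mul_of_nonneg_right hβ2 hSnn
      simp only [hGdef]
      linarith
    have h2G : Tendsto (fun β => 2 / G β) (nhdsWithin μ0 (Iio μ0)) (nhds 0) := by
      have hnegG : Tendsto (fun β => -G β) (nhdsWithin μ0 (Iio μ0)) atTop :=
        tendsto_neg_atBot_atTop.comp hGbot
      have := tendsto_const_nhds.div_atTop hnegG (a := (2:ℝ))
      have h' : Tendsto (fun β => -(2 / -G β)) (nhdsWithin μ0 (Iio μ0)) (nhds (-0)) := this.neg
      simpa [div_neg] using h'
    have hftend : Tendsto (fun β => -1 - 2 / G β) (nhdsWithin μ0 (Iio μ0)) (nhds (-1)) := by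
      have := (tendsto_const_nhds (x := (-1:ℝ))).sub h2G
      simpa using this
    refine Tendsto.congr' ?_ hftend
    filter_upwards [hself] with β hβ
    rw [hf β (ne_of_lt (hgneg β hβ)), hgG β hβ]
  · -- bounded above
    refine ⟨-1 + 2 / c, ?_⟩
    rintro x ⟨β, hβ, rfl⟩
    exact hfle β hβ
  · -- no solutions for lam ≤ -1
    rintro lam hlam ⟨β, hβ, hfβ⟩
    have := hfgt β hβ
    linarith
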